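/- Let h₁ : S^m → S^m and h₂ : Sⁿ → Sⁿ be homeomorphisms. Then the map h defined on the glued space M^{m+n+1}_{(h₁,h₂)} by h(x̃,ỹ) = (x̃/√(1+‖x̃‖²), ỹ/√(1+‖x̃‖²)) on the chart ℝ^{m+1}×Sⁿ and h(x̄,ȳ) = (h₁⁻¹(x̄)/√(1+‖ȳ‖²), ‖ȳ‖h₂⁻¹(ȳ/‖ȳ‖)/√(1+‖ȳ‖²)) on the chart S^m×ℝ^{n+1} is a bijection onto S^{m+n+1}. -/

import Mathlib

open Metric in
/-- The gluing relation of the Milnor construction: `(t•x, y) ∼ (h₁ x, t⁻¹ • h₂ y)`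
for `t > 0`, `x ∈ Sᵐ`, `y ∈ Sⁿ`. -/
def milnorRel (m n : ℕ)
    (h₁ : sphere (0 : EuclideanSpace ℝ (Fin (m + 1))) 1 ≃ₜ
          sphere (0 : EuclideanSpace ℝ (Fin (m + 1))) 1)
    (h₂ : sphere (0 : EuclideanSpace ℝ (Fin (n + 1))) 1 ≃ₜ
          sphere (0 : EuclideanSpace ℝ (Fin (n + 1))) 1) :
    (EuclideanSpace ℝ (Fin (m + 1)) × sphere (0 : EuclideanSpace ℝ (Fin (n + 1))) 1) ⊕
      (sphere (0 : EuclideanSpace ℝ (Fin (m + 1))) 1 × EuclideanSpace ℝ (Fin (n + 1))) →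
    (EuclideanSpace ℝ (Fin (m + 1)) × sphere (0 : EuclideanSpace ℝ (Fin (n + 1))) 1) ⊕
      (sphere (0 : EuclideanSpace ℝ (Fin (m + 1))) 1 × EuclideanSpace ℝ (Fin (n + 1))) →
    Prop
  | Sum.inl p, Sum.inr q =>
      ∃ t : ℝ, 0 < t ∧ ∃ (x : sphere (0 : EuclideanSpace ℝ (Fin (m + 1))) 1) (y : sphere (0 : EuclideanSpace ℝ (Fin (n + 1))) 1), p.1 = t • (x : EuclideanSpace ℝ (Fin (m + 1))) ∧ p.2 = y ∧
        q.1 = h₁ x ∧ q.2 = t⁻¹ • ((h₂ y : sphere (0 : EuclideanSpace ℝ (Fin (n + 1))) 1) :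
          EuclideanSpace ℝ (Fin (n + 1)))
  | _, _ => False

open Metric in
/-- Radial inverse normalization `ȳ ↦ h₂⁻¹(ȳ/‖ȳ‖)` (defined as `0` at `ȳ = 0`). -/
noncomputable def invNormalize (n : ℕ)
    (h₂ : sphere (0 : EuclideanSpace ℝ (Fin (n + 1))) 1 ≃ₜ
          sphere (0 : EuclideanSpace ℝ (Fin (n + 1))) 1)
    (y : EuclideanSpace ℝ (Fin (n + 1))) : EuclideanSpace ℝ (Fin (n + 1)) :=
  haveI := Classical.dec (y = 0)
  if h : y = 0 then 0
  else (h₂.symm ⟨‖y‖⁻¹ • y, by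
    rw [mem_sphere_zero_iff_norm, norm_smul, norm_inv, norm_norm,
      inv_mul_cancel₀ (norm_ne_zero_iff.mpr h)]⟩ :
    sphere (0 : EuclideanSpace ℝ (Fin (n + 1))) 1)

open Metric in
/-- The chart-wise map `h` of the construction, on the disjoint union. -/
noncomputable def milnorMap (m n : ℕ)
    (h₁ : sphere (0 : EuclideanSpace ℝ (Fin (m + 1))) 1 ≃ₜ
          sphere (0 : EuclideanSpace ℝ (Fin (m + 1))) 1)
    (h₂ : sphere (0 : EuclideanSpace ℝ (Fin (n + 1))) 1 ≃ₜ
          sphere (0 : EuclideanSpace ℝ (Fin (n + 1))) 1) :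
    (EuclideanSpace ℝ (Fin (m + 1)) × sphere (0 : EuclideanSpace ℝ (Fin (n + 1))) 1) ⊕
      (sphere (0 : EuclideanSpace ℝ (Fin (m + 1))) 1 × EuclideanSpace ℝ (Fin (n + 1))) →
    EuclideanSpace ℝ (Fin (m + 1)) × EuclideanSpace ℝ (Fin (n + 1))
  | Sum.inl p =>
      ((Real.sqrt (1 + ‖p.1‖ ^ 2))⁻¹ • p.1,
        (Real.sqrt (1 + ‖p.1‖ ^ 2))⁻¹ • (p.2 : EuclideanSpace ℝ (Fin (n + 1))))
  | Sum.inr q =>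
      ((Real.sqrt (1 + ‖q.2‖ ^ 2))⁻¹ •
          ((h₁.symm q.1 : sphere (0 : EuclideanSpace ℝ (Fin (m + 1))) 1) :
            EuclideanSpace ℝ (Fin (m + 1))),
        (Real.sqrt (1 + ‖q.2‖ ^ 2))⁻¹ • ‖q.2‖ • invNormalize n h₂ q.2)

open Metric

section Aux
variable {n : ℕ}
  (h₂ : sphere (0 : EuclideanSpace ℝ (Fin (n + 1))) 1 ≃ₜ
        sphere (0 : EuclideanSpace ℝ (Fin (n + 1))) 1)

lemma milnor_sqrt_pos (r : ℝ) : 0 < Real.sqrt (1 + r ^ 2) :=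
  Real.sqrt_pos.mpr (by positivity)

lemma milnor_sq_sqrt (r : ℝ) : Real.sqrt (1 + r ^ 2) ^ 2 = 1 + r ^ 2 :=
  Real.sq_sqrt (by positivity)

lemma norm_invNormalize {y : EuclideanSpace ℝ (Fin (n + 1))} (hy : y ≠ 0) :
    ‖invNormalize n h₂ y‖ = 1 := by
  rw [invNormalize, dif_neg hy]
  exact norm_eq_of_mem_sphere _

lemma symm_coe_eq {A y : sphere (0 : EuclideanSpace ℝ (Fin (n + 1))) 1}
    (h : ((h₂.symm A : sphere (0 : EuclideanSpace ℝ (Fin (n + 1))) 1) :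
      EuclideanSpace ℝ (Fin (n + 1))) = y) :
    (A : EuclideanSpace ℝ (Fin (n + 1))) = h₂ y := by
  have h' : h₂.symm A = y := Subtype.ext h
  rw [← h', Homeomorph.apply_symm_apply]

lemma invNormalize_eq_coe {yb : EuclideanSpace ℝ (Fin (n + 1))} (hyb : yb ≠ 0)
    {y : sphere (0 : EuclideanSpace ℝ (Fin (n + 1))) 1}
    (h : invNormalize n h₂ yb = (y : EuclideanSpace ℝ (Fin (n + 1)))) :
    yb = ‖yb‖ • ((h₂ y : sphere (0 : EuclideanSpace ℝ (Fin (n + 1))) 1) :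
      EuclideanSpace ℝ (Fin (n + 1))) := by
  rw [invNormalize, dif_neg hyb] at h
  have h2 := symm_coe_eq h₂ h
  have h3 : ‖yb‖⁻¹ • yb = ((h₂ y : sphere (0 : EuclideanSpace ℝ (Fin (n + 1))) 1) :
      EuclideanSpace ℝ (Fin (n + 1))) := h2
  rw [← h3, smul_smul, mul_inv_cancel₀ (norm_ne_zero_iff.mpr hyb), one_smul]

lemma invNormalize_smul {t : ℝ} (ht : 0 < t)
    (y : sphere (0 : EuclideanSpace ℝ (Fin (n + 1))) 1) :
    invNormalize n h₂ (t • ((h₂ y : sphere (0 : EuclideanSpace ℝ (Fin (n + 1))) 1) :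
      EuclideanSpace ℝ (Fin (n + 1)))) = y := by
  have hv : ‖((h₂ y : sphere (0 : EuclideanSpace ℝ (Fin (n + 1))) 1) :
      EuclideanSpace ℝ (Fin (n + 1)))‖ = 1 := norm_eq_of_mem_sphere _
  have hne : t • ((h₂ y : sphere (0 : EuclideanSpace ℝ (Fin (n + 1))) 1) :
      EuclideanSpace ℝ (Fin (n + 1))) ≠ 0 := by
    refine smul_ne_zero ht.ne' fun h => ?_
    rw [h, norm_zero] at hv; norm_num at hv
  rw [invNormalize, dif_neg hne]
  have key : ∀ (A : sphere (0 : EuclideanSpace ℝ (Fin (n + 1))) 1),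
      (A : EuclideanSpace ℝ (Fin (n + 1))) = h₂ y →
      ((h₂.symm A : sphere (0 : EuclideanSpace ℝ (Fin (n + 1))) 1) :
        EuclideanSpace ℝ (Fin (n + 1))) = y := by
    intro A hA
    have : A = h₂ y := Subtype.ext hA
    rw [this, Homeomorph.symm_apply_apply]
  refine key _ ?_
  show ‖t • _‖⁻¹ • (t • _) = _
  rw [norm_smul, hv, mul_one, Real.norm_eq_abs, abs_of_pos ht, smul_smul,
    inv_mul_cancel₀ ht.ne', one_smul]

end Aux

section Aux2
variable {m n : ℕ}
  (h₁ : sphere (0 : EuclideanSpace ℝ (Fin (m + 1))) 1 ≃ₜ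
        sphere (0 : EuclideanSpace ℝ (Fin (m + 1))) 1)
  (h₂ : sphere (0 : EuclideanSpace ℝ (Fin (n + 1))) 1 ≃ₜ
        sphere (0 : EuclideanSpace ℝ (Fin (n + 1))) 1)

lemma milnorMap_inl_inj {p p'} (h : milnorMap m n h₁ h₂ (Sum.inl p) = milnorMap m n h₁ h₂ (Sum.inl p')) :
    p = p' := by
  obtain ⟨e1, e2⟩ := Prod.mk.injEq .. ▸ h
  have hs : (Real.sqrt (1 + ‖p.1‖ ^ 2))⁻¹ = (Real.sqrt (1 + ‖p'.1‖ ^ 2))⁻¹ := by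
    have := congrArg norm e2
    rwa [norm_smul, norm_smul, norm_eq_of_mem_sphere, norm_eq_of_mem_sphere, mul_one, mul_one,
      Real.norm_eq_abs, Real.norm_eq_abs, abs_of_pos (inv_pos.mpr (milnor_sqrt_pos _)),
      abs_of_pos (inv_pos.mpr (milnor_sqrt_pos _))] at this
  have hspos : (Real.sqrt (1 + ‖p.1‖ ^ 2))⁻¹ ≠ 0 := (inv_pos.mpr (milnor_sqrt_pos _)).ne'
  rw [← hs] at e1 e2
  have h1 : p.1 = p'.1 := smul_right_injective _ hspos e1
  have h2 : p.2 = p'.2 := Subtype.ext (smul_right_injective _ hspos e2)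
  exact Prod.ext h1 h2

lemma milnorMap_inr_inj {q q'} (h : milnorMap m n h₁ h₂ (Sum.inr q) = milnorMap m n h₁ h₂ (Sum.inr q')) :
    q = q' := by
  obtain ⟨e1, e2⟩ := Prod.mk.injEq .. ▸ h
  have hs : (Real.sqrt (1 + ‖q.2‖ ^ 2))⁻¹ = (Real.sqrt (1 + ‖q'.2‖ ^ 2))⁻¹ := by
    have := congrArg norm e1
    rwa [norm_smul, norm_smul, norm_eq_of_mem_sphere, norm_eq_of_mem_sphere, mul_one, mul_one,
      Real.norm_eq_abs, Real.norm_eq_abs, abs_of_pos (inv_pos.mpr (milnor_sqrt_pos _)),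
      abs_of_pos (inv_pos.mpr (milnor_sqrt_pos _))] at this
  have hspos : (Real.sqrt (1 + ‖q.2‖ ^ 2))⁻¹ ≠ 0 := (inv_pos.mpr (milnor_sqrt_pos _)).ne'
  have hnorm : ‖q.2‖ = ‖q'.2‖ := by
    have hsq : Real.sqrt (1 + ‖q.2‖ ^ 2) = Real.sqrt (1 + ‖q'.2‖ ^ 2) :=
      inv_injective hs
    have := congrArg (· ^ 2) hsq
    simp only [milnor_sq_sqrt] at this
    have h2 : ‖q.2‖ ^ 2 = ‖q'.2‖ ^ 2 := by linarith
    nlinarith [norm_nonneg q.2, norm_nonneg q'.2]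
  rw [← hs] at e1 e2
  rw [← hnorm] at e2
  have hx : q.1 = q'.1 := h₁.symm.injective (Subtype.ext (smul_right_injective _ hspos e1))
  have e2' : ‖q.2‖ • invNormalize n h₂ q.2 = ‖q.2‖ • invNormalize n h₂ q'.2 :=
    smul_right_injective _ hspos e2
  have hy : q.2 = q'.2 := by
    rcases eq_or_ne q.2 0 with h0 | h0
    · have : ‖q'.2‖ = 0 := by rw [← hnorm, h0, norm_zero]
      rw [h0, (norm_eq_zero.mp this)]
    · have h0' : q'.2 ≠ 0 := by
        intro hc; rw [hc, norm_zero] at hnorm; exact h0 (norm_eq_zero.mp hnorm)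
      have hn0 : ‖q.2‖ ≠ 0 := norm_ne_zero_iff.mpr h0
      have e3 : invNormalize n h₂ q.2 = invNormalize n h₂ q'.2 :=
        smul_right_injective _ hn0 e2'
      set y : sphere (0 : EuclideanSpace ℝ (Fin (n + 1))) 1 :=
        ⟨invNormalize n h₂ q'.2, by
          rw [mem_sphere_zero_iff_norm]; exact norm_invNormalize h₂ h0'⟩ with hy
      have r1 : q.2 = ‖q.2‖ • ((h₂ y : sphere (0 : EuclideanSpace ℝ (Fin (n + 1))) 1) :
          EuclideanSpace ℝ (Fin (n + 1))) := invNormalize_eq_coe h₂ h0 e3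
      have r2 : q'.2 = ‖q'.2‖ • ((h₂ y : sphere (0 : EuclideanSpace ℝ (Fin (n + 1))) 1) :
          EuclideanSpace ℝ (Fin (n + 1))) := invNormalize_eq_coe h₂ h0' rfl
      rw [r1, r2, hnorm]
  exact Prod.ext hx hy

end Aux2

section Aux3
variable {m n : ℕ}
  (h₁ : sphere (0 : EuclideanSpace ℝ (Fin (m + 1))) 1 ≃ₜ
        sphere (0 : EuclideanSpace ℝ (Fin (m + 1))) 1)
  (h₂ : sphere (0 : EuclideanSpace ℝ (Fin (n + 1))) 1 ≃ₜ
        sphere (0 : EuclideanSpace ℝ (Fin (n + 1))) 1)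

lemma milnor_sqrt_key {t : ℝ} (ht : 0 < t) :
    Real.sqrt (1 + (t⁻¹) ^ 2) = t⁻¹ * Real.sqrt (1 + t ^ 2) := by
  have h1 : (1 : ℝ) + (t⁻¹) ^ 2 = (t⁻¹) ^ 2 * (1 + t ^ 2) := by
    field_simp
    ring
  rw [h1, Real.sqrt_mul (by positivity), Real.sqrt_sq (inv_pos.mpr ht).le]

lemma milnorMap_inl_eq_inr_iff {p q} :
    milnorMap m n h₁ h₂ (Sum.inl p) = milnorMap m n h₁ h₂ (Sum.inr q) ↔
    milnorRel m n h₁ h₂ (Sum.inl p) (Sum.inr q) := by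
  constructor
  · intro h
    obtain ⟨e1, e2⟩ := Prod.mk.injEq .. ▸ h
    have hs1pos : (0:ℝ) < (Real.sqrt (1 + ‖p.1‖ ^ 2))⁻¹ := inv_pos.mpr (milnor_sqrt_pos _)
    have hs1ne : (Real.sqrt (1 + ‖p.1‖ ^ 2))⁻¹ ≠ 0 := hs1pos.ne'
    have hq20 : q.2 ≠ 0 := by
      intro h0
      apply hs1ne
      have hnn := congrArg norm e2
      simp only [h0, norm_zero, zero_smul, smul_zero, norm_smul, norm_eq_of_mem_sphere,
        mul_one, Real.norm_eq_abs] at hnn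
      rwa [abs_of_pos hs1pos] at hnn
    -- norms of e1 : s₁⁻¹ * ‖p.1‖ = s₂⁻¹
    have hs2 : (Real.sqrt (1 + ‖q.2‖ ^ 2))⁻¹ = (Real.sqrt (1 + ‖p.1‖ ^ 2))⁻¹ * ‖p.1‖ := by
      have hnn := congrArg norm e1
      rw [norm_smul, norm_smul, norm_eq_of_mem_sphere, mul_one, Real.norm_eq_abs,
        Real.norm_eq_abs, abs_of_pos hs1pos, abs_of_pos (inv_pos.mpr (milnor_sqrt_pos _))] at hnn
      exact hnn.symm
    have tpos : 0 < ‖p.1‖ := by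
      rcases (norm_nonneg p.1).lt_or_eq with h' | h'
      · exact h'
      · exfalso
        rw [← h', mul_zero] at hs2
        exact (inv_pos.mpr (milnor_sqrt_pos ‖q.2‖)).ne' hs2
    set t := ‖p.1‖ with htdef
    have tne : t ≠ 0 := tpos.ne'
    -- norm of e2 : s₁⁻¹ = s₂⁻¹ * ‖q.2‖
    have hn2 : (Real.sqrt (1 + t ^ 2))⁻¹ =
        (Real.sqrt (1 + ‖q.2‖ ^ 2))⁻¹ * ‖q.2‖ := by
      have hnn := congrArg norm e2
      rwa [norm_smul, norm_smul, norm_smul, norm_eq_of_mem_sphere,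
        norm_invNormalize h₂ hq20, mul_one, mul_one, Real.norm_eq_abs, Real.norm_eq_abs,
        Real.norm_eq_abs, abs_of_pos hs1pos, abs_of_pos (inv_pos.mpr (milnor_sqrt_pos _)),
        abs_of_nonneg (norm_nonneg q.2)] at hnn
    have htq : t * ‖q.2‖ = 1 := by
      rw [hs2, mul_assoc] at hn2
      exact mul_left_cancel₀ hs1ne
        (show (Real.sqrt (1 + t ^ 2))⁻¹ * (t * ‖q.2‖) = (Real.sqrt (1 + t ^ 2))⁻¹ * 1 by
          rw [mul_one]; exact hn2.symm)
    have hnq : ‖q.2‖ = t⁻¹ := (inv_eq_of_mul_eq_one_right htq).symm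
    have e1' : p.1 = t • ((h₁.symm q.1 : sphere (0 : EuclideanSpace ℝ (Fin (m + 1))) 1) :
        EuclideanSpace ℝ (Fin (m + 1))) := by
      rw [hs2, mul_smul] at e1
      exact smul_right_injective _ hs1ne e1
    set x : sphere (0 : EuclideanSpace ℝ (Fin (m + 1))) 1 :=
      ⟨t⁻¹ • p.1, by
        rw [mem_sphere_zero_iff_norm, norm_smul, Real.norm_eq_abs,
          abs_of_pos (inv_pos.mpr tpos), ← htdef, inv_mul_cancel₀ tne]⟩ with hxdef
    have hsymm : h₁.symm q.1 = x := Subtype.ext (by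
      show ((h₁.symm q.1 : sphere (0 : EuclideanSpace ℝ (Fin (m + 1))) 1) :
        EuclideanSpace ℝ (Fin (m + 1))) = t⁻¹ • p.1
      rw [e1', inv_smul_smul₀ tne])
    have hq1 : q.1 = h₁ x := by rw [← hsymm, Homeomorph.apply_symm_apply]
    have e2' : invNormalize n h₂ q.2 = (p.2 : EuclideanSpace ℝ (Fin (n + 1))) := by
      rw [hs2, hnq, mul_smul] at e2
      have h5 := smul_right_injective _ hs1ne e2
      rw [smul_inv_smul₀ tne] at h5
      exact h5.symm
    have hq2 : q.2 = t⁻¹ • ((h₂ p.2 : sphere (0 : EuclideanSpace ℝ (Fin (n + 1))) 1) :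
        EuclideanSpace ℝ (Fin (n + 1))) := by
      have := invNormalize_eq_coe h₂ hq20 e2'
      rwa [hnq] at this
    exact ⟨t, tpos, x, p.2, (smul_inv_smul₀ tne p.1).symm, rfl, hq1, hq2⟩
  · rintro ⟨t, ht, x, y, hp1, hp2, hq1, hq2⟩
    have hxn : ‖(x : EuclideanSpace ℝ (Fin (m + 1)))‖ = 1 := norm_eq_of_mem_sphere _
    have hnp : ‖p.1‖ = t := by
      rw [hp1, norm_smul, hxn, mul_one, Real.norm_eq_abs, abs_of_pos ht]
    have hnq : ‖q.2‖ = t⁻¹ := by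
      rw [hq2, norm_smul, norm_eq_of_mem_sphere, mul_one, Real.norm_eq_abs,
        abs_of_pos (inv_pos.mpr ht)]
    have hs0 : Real.sqrt (1 + t ^ 2) ≠ 0 := (milnor_sqrt_pos t).ne'
    show ((Real.sqrt (1 + ‖p.1‖ ^ 2))⁻¹ • p.1,
        (Real.sqrt (1 + ‖p.1‖ ^ 2))⁻¹ • (p.2 : EuclideanSpace ℝ (Fin (n + 1)))) =
      ((Real.sqrt (1 + ‖q.2‖ ^ 2))⁻¹ •
          ((h₁.symm q.1 : sphere (0 : EuclideanSpace ℝ (Fin (m + 1))) 1) :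
            EuclideanSpace ℝ (Fin (m + 1))),
        (Real.sqrt (1 + ‖q.2‖ ^ 2))⁻¹ • ‖q.2‖ • invNormalize n h₂ q.2)
    rw [hnp, hnq, hq1, Homeomorph.symm_apply_apply, hp2, hq2,
      invNormalize_smul h₂ (inv_pos.mpr ht), milnor_sqrt_key ht, hp1]
    refine Prod.ext ?_ ?_
    · show (Real.sqrt (1 + t ^ 2))⁻¹ • t • (x : EuclideanSpace ℝ (Fin (m + 1))) =
        (t⁻¹ * Real.sqrt (1 + t ^ 2))⁻¹ • (x : EuclideanSpace ℝ (Fin (m + 1)))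
      rw [smul_smul]
      congr 1
      field_simp
    · show (Real.sqrt (1 + t ^ 2))⁻¹ • (y : EuclideanSpace ℝ (Fin (n + 1))) =
        (t⁻¹ * Real.sqrt (1 + t ^ 2))⁻¹ • t⁻¹ • (y : EuclideanSpace ℝ (Fin (n + 1)))
      rw [smul_smul]
      congr 1
      field_simp

end Aux3

section Main
variable {m n : ℕ}
  (h₁ : sphere (0 : EuclideanSpace ℝ (Fin (m + 1))) 1 ≃ₜ
        sphere (0 : EuclideanSpace ℝ (Fin (m + 1))) 1)
  (h₂ : sphere (0 : EuclideanSpace ℝ (Fin (n + 1))) 1 ≃ₜ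
        sphere (0 : EuclideanSpace ℝ (Fin (n + 1))) 1)

lemma milnorMap_inl (p) : milnorMap m n h₁ h₂ (Sum.inl p) =
    ((Real.sqrt (1 + ‖p.1‖ ^ 2))⁻¹ • p.1,
      (Real.sqrt (1 + ‖p.1‖ ^ 2))⁻¹ • (p.2 : EuclideanSpace ℝ (Fin (n + 1)))) := rfl

lemma milnorMap_inr (q) : milnorMap m n h₁ h₂ (Sum.inr q) =
    ((Real.sqrt (1 + ‖q.2‖ ^ 2))⁻¹ •
        ((h₁.symm q.1 : sphere (0 : EuclideanSpace ℝ (Fin (m + 1))) 1) :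
          EuclideanSpace ℝ (Fin (m + 1))),
      (Real.sqrt (1 + ‖q.2‖ ^ 2))⁻¹ • ‖q.2‖ • invNormalize n h₂ q.2) := rfl

end Main


/-- For homeomorphisms `h₁ : Sᵐ → Sᵐ`, `h₂ : Sⁿ → Sⁿ`, the chart-wise map
`h` descends to a well-defined bijection from the glued space `M^{m+n+1}_{(h₁,h₂)}`
(the quotient of the disjoint union by the gluing relation) onto the unit sphere
`S^{m+n+1}`: two points have the same image iff they are identified in the quotient,
and the range of `h` is exactly the unit sphere. -/
theorem stmt_8 (m n : ℕ)
    (h₁ : Metric.sphere (0 : EuclideanSpace ℝ (Fin (m + 1))) 1 ≃ₜ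
          Metric.sphere (0 : EuclideanSpace ℝ (Fin (m + 1))) 1)
    (h₂ : Metric.sphere (0 : EuclideanSpace ℝ (Fin (n + 1))) 1 ≃ₜ
          Metric.sphere (0 : EuclideanSpace ℝ (Fin (n + 1))) 1) :
    (∀ a b, milnorMap m n h₁ h₂ a = milnorMap m n h₁ h₂ b ↔
        Relation.EqvGen (milnorRel m n h₁ h₂) a b) ∧
    Set.range (milnorMap m n h₁ h₂) =
      {q : EuclideanSpace ℝ (Fin (m + 1)) × EuclideanSpace ℝ (Fin (n + 1)) |
        ‖q.1‖ ^ 2 + ‖q.2‖ ^ 2 = 1} := by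
  constructor
  · intro a b
    constructor
    · intro h
      match a, b with
      | Sum.inl p, Sum.inl p' =>
        exact (milnorMap_inl_inj h₁ h₂ h) ▸ Relation.EqvGen.refl _
      | Sum.inl p, Sum.inr q =>
        exact Relation.EqvGen.rel _ _ ((milnorMap_inl_eq_inr_iff h₁ h₂).mp h)
      | Sum.inr q, Sum.inl p =>
        exact Relation.EqvGen.symm _ _
          (Relation.EqvGen.rel _ _ ((milnorMap_inl_eq_inr_iff h₁ h₂).mp h.symm))
      | Sum.inr q, Sum.inr q' =>
        exact (milnorMap_inr_inj h₁ h₂ h) ▸ Relation.EqvGen.refl _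
    · intro h
      induction h with
      | rel a b hab =>
        match a, b, hab with
        | Sum.inl p, Sum.inr q, hab => exact (milnorMap_inl_eq_inr_iff h₁ h₂).mpr hab
        | Sum.inl p, Sum.inl p', hab => exact hab.elim
        | Sum.inr q, Sum.inl p, hab => exact hab.elim
        | Sum.inr q, Sum.inr q', hab => exact hab.elim
      | refl a => rfl
      | symm a b _ ih => exact ih.symm
      | trans a b c _ _ ih1 ih2 => exact ih1.trans ih2
  · ext ⟨a, b⟩
    simp only [Set.mem_range, Set.mem_setOf_eq]
    constructor
    · rintro ⟨c, hc⟩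
      match c with
      | Sum.inl p =>
        rw [milnorMap_inl] at hc
        obtain ⟨e1, e2⟩ := Prod.mk.injEq .. ▸ hc
        rw [← e1, ← e2, norm_smul, norm_smul, norm_eq_of_mem_sphere, mul_one,
          Real.norm_eq_abs, abs_of_pos (inv_pos.mpr (milnor_sqrt_pos _)), mul_pow, inv_pow,
          milnor_sq_sqrt]
        have hpos : (0:ℝ) < 1 + ‖p.1‖ ^ 2 := by positivity
        field_simp
        ring
      | Sum.inr q =>
        rw [milnorMap_inr] at hc
        obtain ⟨e1, e2⟩ := Prod.mk.injEq .. ▸ hc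
        have hb : ‖‖q.2‖ • invNormalize n h₂ q.2‖ = ‖q.2‖ := by
          rcases eq_or_ne q.2 0 with h0 | h0
          · simp [h0]
          · rw [norm_smul, norm_invNormalize h₂ h0, mul_one, Real.norm_eq_abs,
              abs_of_nonneg (norm_nonneg _)]
        rw [← e1, ← e2, norm_smul, norm_smul, norm_eq_of_mem_sphere, mul_one, hb,
          Real.norm_eq_abs, abs_of_pos (inv_pos.mpr (milnor_sqrt_pos _)), mul_pow, inv_pow,
          milnor_sq_sqrt]
        have hpos : (0:ℝ) < 1 + ‖q.2‖ ^ 2 := by positivity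
        field_simp
    · intro hab
      rcases eq_or_ne b 0 with hb | hb
      · have ha1 : ‖a‖ = 1 := by
          rw [hb, norm_zero] at hab
          nlinarith [norm_nonneg a]
        refine ⟨Sum.inr (h₁ ⟨a, by rwa [mem_sphere_zero_iff_norm]⟩, 0), ?_⟩
        rw [milnorMap_inr, Homeomorph.symm_apply_apply]
        refine Prod.ext ?_ ?_
        · show (Real.sqrt (1 + ‖(0 : EuclideanSpace ℝ (Fin (n+1)))‖ ^ 2))⁻¹ • a = a
          rw [norm_zero]
          norm_num
        · show (Real.sqrt (1 + ‖(0 : EuclideanSpace ℝ (Fin (n+1)))‖ ^ 2))⁻¹ •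
            ‖(0 : EuclideanSpace ℝ (Fin (n+1)))‖ • invNormalize n h₂ 0 = b
          rw [hb, norm_zero, zero_smul, smul_zero]
      · have hbn : ‖b‖ ≠ 0 := norm_ne_zero_iff.mpr hb
        have hkey : Real.sqrt (1 + ‖‖b‖⁻¹ • a‖ ^ 2) = ‖b‖⁻¹ := by
          rw [norm_smul, Real.norm_eq_abs, abs_of_nonneg (inv_nonneg.mpr (norm_nonneg b)),
            mul_pow]
          have h2 : 1 + ‖b‖⁻¹ ^ 2 * ‖a‖ ^ 2 = (‖b‖⁻¹) ^ 2 := by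
            have ha2 : ‖a‖ ^ 2 = 1 - ‖b‖ ^ 2 := by linarith
            rw [ha2]
            field_simp
            ring
          rw [h2, Real.sqrt_sq (inv_nonneg.mpr (norm_nonneg b))]
        refine ⟨Sum.inl (‖b‖⁻¹ • a, ⟨‖b‖⁻¹ • b, by
          rw [mem_sphere_zero_iff_norm, norm_smul, Real.norm_eq_abs,
            abs_of_nonneg (inv_nonneg.mpr (norm_nonneg b)), inv_mul_cancel₀ hbn]⟩), ?_⟩
        rw [milnorMap_inl]
        show ((Real.sqrt (1 + ‖‖b‖⁻¹ • a‖ ^ 2))⁻¹ • ‖b‖⁻¹ • a,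
          (Real.sqrt (1 + ‖‖b‖⁻¹ • a‖ ^ 2))⁻¹ • ‖b‖⁻¹ • b) = (a, b)
        rw [hkey, inv_inv]
        refine Prod.ext ?_ ?_
        · show ‖b‖ • ‖b‖⁻¹ • a = a
          rw [smul_inv_smul₀ hbn]
        · show ‖b‖ • ‖b‖⁻¹ • b = b
          rw [smul_inv_smul₀ hbn]
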